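/- The projective curve 3X³ + 4Y³ + 5Z³ = 0 has a nontrivial point over ℝ and over ℚ_p for every prime p. -/

import Mathlib

open Polynomial

/-- In a finite cyclic group, two nontrivial cube roots of unity are equal or inverse. -/
lemma selmer_cyclic_cube_roots {Q : Type*} [Group Q] [Finite Q] [IsCyclic Q] {a b : Q}
    (ha3 : a ^ (3 : ℕ) = 1) (hb3 : b ^ (3 : ℕ) = 1) (ha : a ≠ 1) (hb : b ≠ 1) :
    b = a ∨ b = a⁻¹ := by
  obtain ⟨g, hg⟩ := IsCyclic.exists_generator (α := Q)
  obtain ⟨m, hm⟩ := Subgroup.mem_zpowers_iff.mp (hg a)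
  obtain ⟨k, hk⟩ := Subgroup.mem_zpowers_iff.mp (hg b)
  have hdm : (orderOf g : ℤ) ∣ 3 * m := orderOf_dvd_iff_zpow_eq_one.mpr (by
    rw [mul_comm (3 : ℤ) m, zpow_mul, hm]; exact_mod_cast ha3)
  have hdk : (orderOf g : ℤ) ∣ 3 * k := orderOf_dvd_iff_zpow_eq_one.mpr (by
    rw [mul_comm (3 : ℤ) k, zpow_mul, hk]; exact_mod_cast hb3)
  have hnm : ¬ ((orderOf g : ℤ) ∣ m) := fun h => ha (hm ▸ orderOf_dvd_iff_zpow_eq_one.mp h)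
  have hnk : ¬ ((orderOf g : ℤ) ∣ k) := fun h => hb (hk ▸ orderOf_dvd_iff_zpow_eq_one.mp h)
  set n : ℤ := (orderOf g : ℤ) with hn
  obtain ⟨s, hs⟩ := hdm
  obtain ⟨t, ht⟩ := hdk
  have h3s : ¬ ((3 : ℤ) ∣ s) := by
    rintro ⟨s', rfl⟩
    exact hnm ⟨s', by linarith⟩
  have h3t : ¬ ((3 : ℤ) ∣ t) := by
    rintro ⟨t', rfl⟩
    exact hnk ⟨t', by linarith⟩
  have hgn : g ^ n = 1 := by
    rw [hn, zpow_natCast, pow_orderOf_eq_one]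
  have hs' : s % 3 ≠ 0 := fun h => h3s (Int.dvd_of_emod_eq_zero h)
  have ht' : t % 3 ≠ 0 := fun h => h3t (Int.dvd_of_emod_eq_zero h)
  have hs1 : s % 3 = 1 ∨ s % 3 = 2 := by omega
  have ht1 : t % 3 = 1 ∨ t % 3 = 2 := by omega
  have hst : (t - s) % 3 = 0 ∨ (t + s) % 3 = 0 := by
    rcases hs1 with h | h <;> rcases ht1 with h' | h' <;> [left; right; right; left] <;> omega
  rcases hst.imp Int.dvd_of_emod_eq_zero Int.dvd_of_emod_eq_zero with ⟨w, hw⟩ | ⟨w, hw⟩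
  · left
    have h33 : 3 * (k - m) = 3 * (n * w) := by linear_combination ht - hs + n * hw
    have hkm : k - m = n * w := by linarith
    have h1 : b * a⁻¹ = 1 := by
      rw [← hk, ← hm, ← zpow_sub, hkm, zpow_mul, hgn, one_zpow]
    exact mul_inv_eq_one.mp h1
  · right
    have h33 : 3 * (k + m) = 3 * (n * w) := by linear_combination ht + hs + n * hw
    have hkm : k + m = n * w := by linarith
    have h1 : b * a = 1 := by
      rw [← hk, ← hm, ← zpow_add, hkm, zpow_mul, hgn, one_zpow]
    exact eq_inv_of_mul_eq_one_left h1

lemma selmer_toZMod_eq_zero_iff {p : ℕ} [Fact p.Prime] (x : ℤ_[p]) :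
    PadicInt.toZMod x = 0 ↔ ‖x‖ < 1 := by
  rw [← RingHom.mem_ker, PadicInt.ker_toZMod, PadicInt.maximalIdeal_eq_span_p,
    Ideal.mem_span_singleton, ← PadicInt.norm_lt_one_iff_dvd]

lemma selmer_norm_int_eq_one {p : ℕ} [Fact p.Prime] (k : ℤ) (hk : (k : ZMod p) ≠ 0) :
    ‖(k : ℤ_[p])‖ = 1 := by
  refine le_antisymm (PadicInt.norm_le_one _) (not_lt.mp fun hlt => hk ?_)
  have h0 := (selmer_toZMod_eq_zero_iff ((k : ℤ) : ℤ_[p])).mpr hlt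
  rwa [map_intCast] at h0

/-- Hensel's lemma specialized to `a * x^3 + b = 0`. -/
lemma selmer_padic_core {p : ℕ} [Fact p.Prime] (a b : ℤ) (r : ℤ_[p])
    (h : ‖(a : ℤ_[p]) * r ^ 3 + (b : ℤ_[p])‖ < ‖3 * ((a : ℤ_[p]) * r ^ 2)‖ ^ 2) :
    ∃ x : ℚ_[p], (a : ℚ_[p]) * x ^ 3 + (b : ℚ_[p]) = 0 := by
  set F : Polynomial ℤ_[p] := Polynomial.C ((a : ℤ_[p])) * Polynomial.X ^ 3
      + Polynomial.C ((b : ℤ_[p])) with hF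
  have heval : ∀ t : ℤ_[p], F.eval t = (a : ℤ_[p]) * t ^ 3 + (b : ℤ_[p]) := by
    intro t; simp [hF]
  have hderiv : F.derivative.eval r = 3 * ((a : ℤ_[p]) * r ^ 2) := by
    simp [hF]; ring
  have hnorm : ‖F.eval r‖ < ‖F.derivative.eval r‖ ^ 2 := by
    rw [heval, hderiv]; exact h
  obtain ⟨z, hz, -, -, -⟩ := hensels_lemma hnorm
  rw [Polynomial.coe_aeval_eq_eval, heval] at hz
  refine ⟨(z : ℚ_[p]), ?_⟩
  exact_mod_cast congrArg (fun t : ℤ_[p] => (t : ℚ_[p])) hz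

/-- Lift a nonzero solution of `a*r^3+b=0` mod `p` to `ℚ_[p]`, provided `3*a` is a unit. -/
lemma selmer_padic_lift {p : ℕ} [Fact p.Prime] (a b : ℤ) (r : ZMod p)
    (h : (a : ZMod p) * r ^ 3 + (b : ZMod p) = 0)
    (ha : (3 : ZMod p) * (a : ZMod p) ≠ 0) (hr : r ≠ 0) :
    ∃ x : ℚ_[p], (a : ℚ_[p]) * x ^ 3 + (b : ℚ_[p]) = 0 := by
  set r' : ℤ_[p] := ((r.val : ℕ) : ℤ_[p]) with hr'
  have hφr : PadicInt.toZMod r' = r := by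
    rw [hr', map_natCast]
    exact ZMod.natCast_rightInverse r
  apply selmer_padic_core a b r'
  have h1 : ‖(a : ℤ_[p]) * r' ^ 3 + (b : ℤ_[p])‖ < 1 := by
    rw [← selmer_toZMod_eq_zero_iff]
    rw [map_add, map_mul, map_pow, map_intCast, map_intCast, hφr]
    exact h
  have h2 : ‖3 * ((a : ℤ_[p]) * r' ^ 2)‖ = 1 := by
    have hne : PadicInt.toZMod (3 * ((a : ℤ_[p]) * r' ^ 2)) ≠ 0 := by
      rw [map_mul, map_mul, map_pow, map_intCast, hφr, map_ofNat]
      exact fun h0 => mul_ne_zero ha (pow_ne_zero 2 hr) (by rw [← mul_assoc] at h0; exact h0)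
    refine le_antisymm (PadicInt.norm_le_one _) (not_lt.mp fun hlt => hne ?_)
    exact (selmer_toZMod_eq_zero_iff _).mpr hlt
  rw [h2, one_pow]
  exact h1

/-- For `p ∤ 30`, one of `-3, -2, 25, -36, -45, -10` is a nonzero cube mod `p`. -/
lemma selmer_six_cubes {p : ℕ} [Fact p.Prime] (h2 : (2 : ZMod p) ≠ 0)
    (h3 : (3 : ZMod p) ≠ 0) (h5 : (5 : ZMod p) ≠ 0) :
    ∃ r : ZMod p, r ≠ 0 ∧ (r ^ 3 = -3 ∨ r ^ 3 = -2 ∨ r ^ 3 = 25 ∨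
      r ^ 3 = -36 ∨ r ^ 3 = -45 ∨ r ^ 3 = -10) := by
  by_contra hcon
  push_neg at hcon
  set H : Subgroup (ZMod p)ˣ := (powMonoidHom 3 : (ZMod p)ˣ →* (ZMod p)ˣ).range with hH
  haveI : H.Normal := H.normal_of_comm
  set mkq : (ZMod p)ˣ →* (ZMod p)ˣ ⧸ H := QuotientGroup.mk' H with hmkq
  haveI : Finite ((ZMod p)ˣ ⧸ H) := Quotient.finite _
  haveI : IsCyclic ((ZMod p)ˣ ⧸ H) := isCyclic_of_surjective mkq (QuotientGroup.mk'_surjective H)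
  have key : ∀ g : (ZMod p)ˣ, (mkq g) ^ (3 : ℕ) = 1 := fun g => by
    rw [← map_pow]
    exact (QuotientGroup.eq_one_iff _).mpr ⟨g, rfl⟩
  have nc : ∀ (u : (ZMod p)ˣ) (m : ℤ), ((u : ZMod p) = (m : ZMod p)) → mkq u = 1 →
      ∃ r : ZMod p, r ≠ 0 ∧ r ^ 3 = (m : ZMod p) := by
    intro u m hm h1
    have hu : u ∈ H := by rwa [← QuotientGroup.ker_mk' H, MonoidHom.mem_ker]
    obtain ⟨ρ, hρ⟩ := hu
    refine ⟨(ρ : ZMod p), ρ.ne_zero, ?_⟩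
    rw [← hm, ← hρ]
    simp [powMonoidHom, Units.val_pow_eq_pow_val]
  set E : (ZMod p)ˣ := Units.mk0 (-1 : ZMod p) (neg_ne_zero.mpr one_ne_zero) with hE
  set A : (ZMod p)ˣ := Units.mk0 (2 : ZMod p) h2 with hA
  set B : (ZMod p)ˣ := Units.mk0 (3 : ZMod p) h3 with hB
  set C5 : (ZMod p)ˣ := Units.mk0 (5 : ZMod p) h5 with hC5
  have hE2 : E ^ 2 = 1 := by
    ext
    rw [hE]
    simp [Units.val_pow_eq_pow_val]
  have he2 : mkq E ^ 2 = 1 := by rw [← map_pow, hE2, map_one]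
  have he : mkq E = 1 := by
    have e3 := key E
    rw [pow_succ, he2, one_mul] at e3
    exact e3
  -- the six non-cube facts
  have hy : mkq B ≠ 1 := by
    intro h1
    obtain ⟨r, hr0, hr3⟩ := nc (E * B) (-3)
      (by rw [Units.val_mul, hE, hB]; simp; try push_cast; try ring)
      (by rw [map_mul, he, one_mul]; exact h1)
    exact (hcon r hr0).1 (by rw [hr3]; push_cast; ring)
  have hx : mkq A ≠ 1 := by
    intro h1
    obtain ⟨r, hr0, hr3⟩ := nc (E * A) (-2)
      (by rw [Units.val_mul, hE, hA]; simp; try push_cast; try ring)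
      (by rw [map_mul, he, one_mul]; exact h1)
    exact (hcon r hr0).2.1 (by rw [hr3]; push_cast; ring)
  have hz2 : (mkq C5) ^ 2 ≠ 1 := by
    intro h1
    obtain ⟨r, hr0, hr3⟩ := nc (C5 * C5) (25)
      (by rw [Units.val_mul, hC5]; simp; try push_cast; try ring)
      (by rw [map_mul, ← sq]; exact h1)
    exact (hcon r hr0).2.2.1 (by rw [hr3]; push_cast; ring)
  have hxy : (mkq A) ^ 2 * (mkq B) ^ 2 ≠ 1 := by
    intro h1
    obtain ⟨r, hr0, hr3⟩ := nc (E * (A * A * (B * B))) (-36)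
      (by rw [Units.val_mul, Units.val_mul, Units.val_mul, Units.val_mul, hE, hA, hB];
          simp; try push_cast; try ring)
      (by rw [map_mul, he, one_mul, map_mul, map_mul, map_mul, ← sq, ← sq]; exact h1)
    exact (hcon r hr0).2.2.2.1 (by rw [hr3]; push_cast; ring)
  have hyz : (mkq B) ^ 2 * mkq C5 ≠ 1 := by
    intro h1
    obtain ⟨r, hr0, hr3⟩ := nc (E * (B * B * C5)) (-45)
      (by rw [Units.val_mul, Units.val_mul, Units.val_mul, hE, hB, hC5];
          simp; try push_cast; try ring)
      (by rw [map_mul, he, one_mul, map_mul, map_mul, ← sq]; exact h1)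
    exact (hcon r hr0).2.2.2.2.1 (by rw [hr3]; push_cast; ring)
  have hxz : mkq A * mkq C5 ≠ 1 := by
    intro h1
    obtain ⟨r, hr0, hr3⟩ := nc (E * (A * C5)) (-10)
      (by rw [Units.val_mul, Units.val_mul, hE, hA, hC5]; simp; try push_cast; try ring)
      (by rw [map_mul, he, one_mul, map_mul]; exact h1)
    exact (hcon r hr0).2.2.2.2.2 (by rw [hr3]; push_cast; ring)
  have hz1 : mkq C5 ≠ 1 := fun h => hz2 (by rw [h, one_pow])
  rcases selmer_cyclic_cube_roots (key A) (key B) hx hy with hba | hba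
  · rcases selmer_cyclic_cube_roots (key A) (key C5) hx hz1 with hca | hca
    · exact hyz (by rw [hba, hca, ← pow_succ]; exact key A)
    · exact hxz (by rw [hca]; group)
  · exact hxy (by rw [hba]; group)

lemma selmer_zmod3_20 : ((20 : ℤ) : ZMod 3) ≠ 0 := by decide
lemma selmer_p2_1 : ((3 : ℤ) : ZMod 2) * (1 : ZMod 2) ^ (3 : ℕ) + ((9 : ℤ) : ZMod 2) = 0 := by decide
lemma selmer_p2_2 : (3 : ZMod 2) * ((3 : ℤ) : ZMod 2) ≠ 0 := by decide
lemma selmer_p2_3 : (1 : ZMod 2) ≠ 0 := by decide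
lemma selmer_p5_1 : ((4 : ℤ) : ZMod 5) * (2 : ZMod 5) ^ (3 : ℕ) + ((8 : ℤ) : ZMod 5) = 0 := by decide
lemma selmer_p5_2 : (3 : ZMod 5) * ((4 : ℤ) : ZMod 5) ≠ 0 := by decide
lemma selmer_p5_3 : (2 : ZMod 5) ≠ 0 := by decide

/-- Selmer's cubic `3*X^3 + 4*Y^3 + 5*Z^3 = 0` has a nontrivial point over `ℝ` and over
`ℚ_[p]` for every prime `p`. -/
theorem selmer_cubic_everywhere_locally_solvable :
    (∃ x y z : ℝ, ¬(x = 0 ∧ y = 0 ∧ z = 0) ∧ 3 * x ^ 3 + 4 * y ^ 3 + 5 * z ^ 3 = 0) ∧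
      ∀ (p : ℕ) [Fact p.Prime], ∃ x y z : ℚ_[p], ¬(x = 0 ∧ y = 0 ∧ z = 0) ∧
        3 * x ^ 3 + 4 * y ^ 3 + 5 * z ^ 3 = 0 := by
  constructor
  · -- real point
    refine ⟨-(4 / 3 : ℝ) ^ ((3 : ℝ)⁻¹), 1, 0, by simp, ?_⟩
    have h1 : (((4 / 3 : ℝ) ^ ((3 : ℝ)⁻¹)) : ℝ) ^ (3 : ℕ) = 4 / 3 := by
      rw [← Real.rpow_natCast ((4 / 3 : ℝ) ^ ((3 : ℝ)⁻¹)) 3, ← Real.rpow_mul (by norm_num)]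
      norm_num
    have h2 : (-(4 / 3 : ℝ) ^ ((3 : ℝ)⁻¹)) ^ (3 : ℕ) = -(4 / 3) := by
      rw [Odd.neg_pow (by decide : Odd 3), h1]
    rw [h2]
    norm_num
  · intro p hp
    by_cases hp3 : p = 3
    · subst hp3
      have hn3 : ‖(3 : ℤ_[3])‖ = (3 : ℝ)⁻¹ := by
        have := PadicInt.norm_p (p := 3)
        simpa using this
      have h540 : ‖((5 : ℤ_[3]) * 2 ^ 3 + 500 : ℤ_[3])‖ = ((3 : ℝ)⁻¹) ^ 3 := by
        have e1 : ((5 : ℤ_[3]) * 2 ^ 3 + 500 : ℤ_[3]) = (3 : ℤ_[3]) ^ 3 * ((20 : ℤ) : ℤ_[3]) := by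
          norm_num
        rw [e1, norm_mul, norm_pow, hn3, selmer_norm_int_eq_one (p := 3) 20 selmer_zmod3_20, mul_one]
      have h60 : ‖(3 * ((5 : ℤ_[3]) * 2 ^ 2) : ℤ_[3])‖ = (3 : ℝ)⁻¹ := by
        have e1 : (3 * ((5 : ℤ_[3]) * 2 ^ 2) : ℤ_[3]) = (3 : ℤ_[3]) * ((20 : ℤ) : ℤ_[3]) := by
          norm_num
        rw [e1, norm_mul, hn3, selmer_norm_int_eq_one (p := 3) 20 selmer_zmod3_20, mul_one]
      obtain ⟨x, hx⟩ := selmer_padic_core (p := 3) 5 500 2 (by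
        push_cast
        rw [h540, h60]
        norm_num)
      push_cast at hx
      refine ⟨0, 5, x, by norm_num, by linear_combination hx⟩
    · have h3 : (3 : ZMod p) ≠ 0 := by
        intro h0
        have : ((3 : ℕ) : ZMod p) = 0 := by exact_mod_cast h0
        rw [ZMod.natCast_eq_zero_iff] at this
        exact hp3 ((Nat.prime_dvd_prime_iff_eq Fact.out (by norm_num)).mp this)
      by_cases hp2 : p = 2
      · subst hp2
        obtain ⟨x, hx⟩ := selmer_padic_lift 3 9 (1 : ZMod 2) selmer_p2_1 selmer_p2_2 selmer_p2_3
        push_cast at hx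
        exact ⟨x, 1, 1, by norm_num, by linear_combination hx⟩
      by_cases hp5 : p = 5
      · subst hp5
        obtain ⟨x, hx⟩ := selmer_padic_lift 4 8 (2 : ZMod 5) selmer_p5_1 selmer_p5_2 selmer_p5_3
        push_cast at hx
        exact ⟨1, x, 1, by norm_num, by linear_combination hx⟩
      · have h2 : (2 : ZMod p) ≠ 0 := by
          intro h0
          have : ((2 : ℕ) : ZMod p) = 0 := by exact_mod_cast h0
          rw [ZMod.natCast_eq_zero_iff] at this
          exact hp2 ((Nat.prime_dvd_prime_iff_eq Fact.out (by norm_num)).mp this)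
        have h5 : (5 : ZMod p) ≠ 0 := by
          intro h0
          have : ((5 : ℕ) : ZMod p) = 0 := by exact_mod_cast h0
          rw [ZMod.natCast_eq_zero_iff] at this
          exact hp5 ((Nat.prime_dvd_prime_iff_eq Fact.out (by norm_num)).mp this)
        have h4 : (4 : ZMod p) ≠ 0 := by
          have e : (4 : ZMod p) = 2 * 2 := by norm_num
          rw [e]
          exact mul_ne_zero h2 h2
        obtain ⟨r, hr0, hcase⟩ := selmer_six_cubes h2 h3 h5
        rcases hcase with hr3 | hr3 | hr3 | hr3 | hr3 | hr3
        · obtain ⟨x, hx⟩ := selmer_padic_lift 3 9 r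
            (by push_cast; rw [hr3]; ring) (by push_cast; exact mul_ne_zero h3 h3) hr0
          push_cast at hx
          exact ⟨x, 1, 1, by norm_num, by linear_combination hx⟩
        · obtain ⟨x, hx⟩ := selmer_padic_lift 4 8 r
            (by push_cast; rw [hr3]; ring) (by push_cast; exact mul_ne_zero h3 h4) hr0
          push_cast at hx
          exact ⟨1, x, 1, by norm_num, by linear_combination hx⟩
        · obtain ⟨x, hx⟩ := selmer_padic_lift 5 (-125) r
            (by push_cast; rw [hr3]; ring) (by push_cast; exact mul_ne_zero h3 h5) hr0
          push_cast at hx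
          refine ⟨5, -5, x, fun hc => ?_, by linear_combination hx⟩
          exact (by norm_num : (5 : ℚ_[p]) ≠ 0) hc.1
        · obtain ⟨x, hx⟩ := selmer_padic_lift 3 108 r
            (by push_cast; rw [hr3]; ring) (by push_cast; exact mul_ne_zero h3 h3) hr0
          push_cast at hx
          refine ⟨x, 3, 0, fun hc => ?_, by linear_combination hx⟩
          exact (by norm_num : (3 : ℚ_[p]) ≠ 0) hc.2.1
        · obtain ⟨x, hx⟩ := selmer_padic_lift 3 135 r
            (by push_cast; rw [hr3]; ring) (by push_cast; exact mul_ne_zero h3 h3) hr0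
          push_cast at hx
          refine ⟨x, 0, 3, fun hc => ?_, by linear_combination hx⟩
          exact (by norm_num : (3 : ℚ_[p]) ≠ 0) hc.2.2
        · obtain ⟨x, hx⟩ := selmer_padic_lift 4 40 r
            (by push_cast; rw [hr3]; ring) (by push_cast; exact mul_ne_zero h3 h4) hr0
          push_cast at hx
          refine ⟨0, x, 2, fun hc => ?_, by linear_combination hx⟩
          exact (by norm_num : (2 : ℚ_[p]) ≠ 0) hc.2.2
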